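/- Let X ⊆ F^× be a compact open subset such that ord(x) ≤ −2 for every x ∈ X, and such that for every a ∈ X there exists an integer n with 1 ≤ n ≤ −ord(a) − 1 and aU⁽ⁿ⁾ ⊆ X. Then ∫_X ψ(x) d^×x = 0. -/

import Mathlib

open MeasureTheory Filter

variable {F : Type*}

/-- The valuation ring `𝒪 = {x | ord x ≥ 0}` (with the convention `0 ∈ 𝒪`). -/
def valRing [Field F] (ord : F → ℤ) : Set F := {x | x = 0 ∨ 0 ≤ ord x}

/-- The unit group `U = 𝒪^×`. -/
def unitGroup [Field F] (ord : F → ℤ) : Set F := {x | x ≠ 0 ∧ ord x = 0}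

/-- The principal congruence subgroup `U⁽ⁿ⁾ = {x ∈ U | x ≡ 1 mod 𝔭ⁿ}` (with `U⁽⁰⁾ = U`). -/
def unitGroupN [Field F] (ord : F → ℤ) (n : ℕ) : Set F :=
  {x | x ≠ 0 ∧ ord x = 0 ∧ (x = 1 ∨ (n : ℤ) ≤ ord (x - 1))}

/-- The integral `∫_X f d^×x` against the multiplicative Haar measure
`d^×x = (1 - 1/q)⁻¹ dx/|x|`, where `dx = μ` is the additive Haar measure and
`|x| = q^{-ord x}` (so `dx/|x| = q^{ord x} dx`). -/
noncomputable def mulInt [Field F] [MeasurableSpace F] (μ : Measure F) (q : ℕ)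
    (ord : F → ℤ) (X : Set F) (f : F → ℂ) : ℂ :=
  (1 - (q : ℂ)⁻¹)⁻¹ * ∫ x in X, f x * (q : ℂ) ^ (ord x) ∂μ

/-- The fractional ideal `𝔭^m` as a set, including `0`. -/
def Pset [Field F] (ord : F → ℤ) (m : ℤ) : Set F := {x | x = 0 ∨ m ≤ ord x}

section helpers
variable [Field F]
variable {ord : F → ℤ}
variable (hord : ∀ x y : F, x ≠ 0 → y ≠ 0 → ord (x * y) = ord x + ord y)

lemma Pset_mono' {m k : ℤ} (h : m ≤ k) : Pset ord k ⊆ Pset ord m := by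
  rintro x (rfl | hx); · exact Or.inl rfl
  · exact Or.inr (h.trans hx)

lemma Pset_zero_mem (m : ℤ) : (0 : F) ∈ Pset ord m := Or.inl rfl

include hord

lemma ord_one' : ord (1 : F) = 0 := by
  have := hord 1 1 one_ne_zero one_ne_zero
  simp only [mul_one] at this; omega

lemma ord_inv' {x : F} (hx : x ≠ 0) : ord x⁻¹ = -ord x := by
  have := hord x x⁻¹ hx (inv_ne_zero hx)
  rw [mul_inv_cancel₀ hx, ord_one' hord] at this; omega

lemma ord_neg' {x : F} (hx : x ≠ 0) : ord (-x) = ord x := by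
  have h1 : ord ((-1 : F) * -1) = ord (-1 : F) + ord (-1 : F) :=
    hord _ _ (by norm_num) (by norm_num)
  simp only [neg_mul, one_mul, neg_neg, ord_one' hord] at h1
  have := hord (-1) x (by norm_num) hx
  rw [neg_one_mul] at this
  omega

lemma Pset_neg {m : ℤ} {x : F} (hx : x ∈ Pset ord m) : -x ∈ Pset ord m := by
  rcases hx with rfl | hx
  · simp [Pset_zero_mem]
  · rcases eq_or_ne x 0 with rfl | hx0
    · simp [Pset_zero_mem]
    · exact Or.inr (by rw [ord_neg' hord hx0]; exact hx)

variable {ϖ : F} (hϖ0 : ϖ ≠ 0) (hϖ : ord ϖ = 1)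
include hϖ0 hϖ

lemma ord_zpow' (m : ℤ) : ord (ϖ ^ m) = m := by
  have hnat : ∀ n : ℕ, ord (ϖ ^ (n : ℕ)) = n := by
    intro n
    induction n with
    | zero => simpa using ord_one' hord
    | succ k ih =>
      rw [pow_succ, hord _ _ (pow_ne_zero _ hϖ0) hϖ0, ih, hϖ]; push_cast; ring
  rcases m with n | n
  · simpa using hnat n
  · rw [zpow_negSucc, ord_inv' hord (pow_ne_zero _ hϖ0), hnat]
    simp [Int.negSucc_eq]

lemma Pset_eq_image (m : ℤ) :
    Pset ord m = (fun x => ϖ ^ m * x) '' valRing ord := by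
  ext y
  constructor
  · rintro (rfl | hy)
    · exact ⟨0, Or.inl rfl, by simp⟩
    · refine ⟨ϖ ^ (-m) * y, ?_, ?_⟩
      · rcases eq_or_ne y 0 with rfl | hy0
        · exact Or.inl (by simp)
        · refine Or.inr ?_
          rw [hord _ _ (zpow_ne_zero _ hϖ0) hy0, ord_zpow' hord hϖ0 hϖ]
          omega
      · show ϖ ^ m * (ϖ ^ (-m) * y) = y
        rw [← mul_assoc, ← zpow_add₀ hϖ0]
        simp
  · rintro ⟨x, hx | hx, rfl⟩
    · subst hx; exact Or.inl (by simp)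
    · rcases eq_or_ne x 0 with rfl | hx0
      · exact Or.inl (by simp)
      · refine Or.inr ?_
        rw [hord _ _ (zpow_ne_zero _ hϖ0) hx0, ord_zpow' hord hϖ0 hϖ]
        omega

variable {ψ : F → ℂ} (hψadd : ∀ x y : F, ψ (x + y) = ψ x * ψ y)
    (hψker : ∀ x : F, ψ x = 1 ↔ x ∈ valRing ord)
include hψadd hψker

lemma Pset_add {m : ℤ} {x y : F} (hx : x ∈ Pset ord m) (hy : y ∈ Pset ord m) :
    x + y ∈ Pset ord m := by
  rcases hx with rfl | hx; · simpa using hy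
  rcases hy with rfl | hy; · rw [add_zero]; exact Or.inr hx
  rcases eq_or_ne x 0 with rfl | hx0; · rw [zero_add]; exact Or.inr hy
  rcases eq_or_ne y 0 with rfl | hy0; · rw [add_zero]; exact Or.inr hx
  have hz : (ϖ ^ (-m) : F) ≠ 0 := zpow_ne_zero _ hϖ0
  have hu : ψ (ϖ ^ (-m) * x) = 1 := by
    rw [hψker]
    exact Or.inr (by rw [hord _ _ hz hx0, ord_zpow' hord hϖ0 hϖ]; omega)
  have hv : ψ (ϖ ^ (-m) * y) = 1 := by
    rw [hψker]
    exact Or.inr (by rw [hord _ _ hz hy0, ord_zpow' hord hϖ0 hϖ]; omega)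
  have hsum : ψ (ϖ ^ (-m) * (x + y)) = 1 := by
    rw [mul_add, hψadd, hu, hv, one_mul]
  rw [hψker] at hsum
  rcases eq_or_ne (x + y) 0 with h0 | h0
  · exact Or.inl h0
  rcases hsum with h | h
  · exact absurd (by rwa [mul_eq_zero, or_iff_right hz] at h) h0
  · refine Or.inr ?_
    rw [hord _ _ hz h0, ord_zpow' hord hϖ0 hϖ] at h
    omega

lemma Pset_sub {m : ℤ} {x y : F} (hx : x ∈ Pset ord m) (hy : y ∈ Pset ord m) :
    x - y ∈ Pset ord m := by
  rw [sub_eq_add_neg]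
  exact Pset_add hord hϖ0 hϖ hψadd hψker hx (Pset_neg hord hy)

lemma ord_ball {m : ℤ} {a s : F} (ha : a ≠ 0) (hm : ord a < m) (hs : s ∈ Pset ord m) :
    a + s ≠ 0 ∧ ord (a + s) = ord a := by
  have hsne : a + s ≠ 0 := by
    rintro h
    have hs' : s = -a := by linear_combination h
    rcases hs with rfl | hs
    · exact ha (by simpa using hs'.symm)
    · rw [hs', ord_neg' hord ha] at hs; omega
  refine ⟨hsne, ?_⟩
  have h1 : a + s ∈ Pset ord (ord a) :=
    Pset_add hord hϖ0 hϖ hψadd hψker (Or.inr le_rfl) (Pset_mono' hm.le hs)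
  have h2 : ord a ≤ ord (a + s) := by
    rcases h1 with h | h
    · exact absurd h hsne
    · exact h
  by_contra hne
  have h3 : ord a + 1 ≤ ord (a + s) := by omega
  have h4 : a ∈ Pset ord (ord a + 1) := by
    have h5 := Pset_sub hord hϖ0 hϖ hψadd hψker
      (Or.inr h3 : a + s ∈ Pset ord (ord a + 1))
      (Pset_mono' (by omega : ord a + 1 ≤ m) hs)
    simpa using h5
  rcases h4 with h | h
  · exact ha h
  · omega

end helpers

section topo
variable [Field F] [TopologicalSpace F] [IsTopologicalRing F]
variable {ord : F → ℤ}
variable (hbasis : (nhds (0 : F)).HasBasis (fun _ : ℕ => True)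
      (fun n => {x : F | x = 0 ∨ (n : ℤ) ≤ ord x}))

include hbasis

lemma Pset_mem_nhds (m : ℤ) : Pset ord m ∈ nhds (0 : F) := by
  have h1 : Pset ord (m.toNat : ℤ) ∈ nhds (0 : F) := hbasis.mem_of_mem trivial
  exact Filter.mem_of_superset h1 (Pset_mono' (Int.self_le_toNat m))

lemma Pset_isOpen
    (hadd : ∀ {k : ℤ} {x y : F}, x ∈ Pset ord k → y ∈ Pset ord k → x + y ∈ Pset ord k)
    (m : ℤ) : IsOpen (Pset ord m) := by
  rw [isOpen_iff_mem_nhds]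
  intro x hx
  rw [← map_add_left_nhds_zero x, Filter.mem_map]
  exact Filter.mem_of_superset (Pset_mem_nhds hbasis m)
    (fun y hy => hadd hx hy)

end topo

section intlemma
variable [Field F] [TopologicalSpace F] [IsTopologicalRing F]
    [MeasurableSpace F] [BorelSpace F]
variable {ψ : F → ℂ} (μ : Measure F) [μ.IsAddHaarMeasure]
variable (hψadd : ∀ x y : F, ψ (x + y) = ψ x * ψ y)

include hψadd in
lemma shift_integral (S : Set F) (hS : MeasurableSet S) (a : F) :
    ∫ x in {x | x - a ∈ S}, ψ x ∂μ = ψ a * ∫ x in S, ψ x ∂μ := by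
  have hT : MeasurableSet {x | x - a ∈ S} :=
    hS.preimage ((continuous_id.sub continuous_const).measurable)
  calc ∫ x in {x | x - a ∈ S}, ψ x ∂μ
      = ∫ x, Set.indicator {x | x - a ∈ S} ψ x ∂μ := (integral_indicator hT).symm
    _ = ∫ x, Set.indicator {x | x - a ∈ S} ψ (a + x) ∂μ :=
        (integral_add_left_eq_self (Set.indicator {x | x - a ∈ S} ψ) a).symm
    _ = ∫ x, Set.indicator S (fun y => ψ a * ψ y) x ∂μ := by
        congr 1
        funext x
        by_cases hx : x ∈ S
        · rw [Set.indicator_of_mem (by simpa using hx), Set.indicator_of_mem hx, hψadd]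
        · rw [Set.indicator_of_notMem (by simpa using hx), Set.indicator_of_notMem hx]
    _ = ∫ x in S, ψ a * ψ x ∂μ := integral_indicator hS
    _ = ψ a * ∫ x in S, ψ x ∂μ := integral_const_mul _ _

end intlemma

lemma disjointify {α β : Type*} (B : α → Set β)
    (hnest : ∀ i j, (B i ∩ B j).Nonempty → B i ⊆ B j ∨ B j ⊆ B i) (t : Finset α) :
    ∃ s : Finset α, s ⊆ t ∧ (⋃ i ∈ s, B i) = (⋃ i ∈ t, B i) ∧
      (s : Set α).Pairwise (Function.onFun Disjoint B) := by
  classical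
  induction t using Finset.strongInduction with
  | _ t ih =>
  rcases t.eq_empty_or_nonempty with rfl | hne
  · exact ⟨∅, by simp, by simp, by simp⟩
  obtain ⟨i, hit, hmax⟩ := Set.Finite.exists_maximalFor B ↑t t.finite_toSet hne
  have hit' : i ∈ t := hit
  set t' := (t.erase i).filter (fun j => Disjoint (B j) (B i)) with ht'
  have ht'subset : t' ⊆ t := (Finset.filter_subset _ _).trans (Finset.erase_subset i t)
  have ht'sub : t' ⊂ t := by
    refine (Finset.ssubset_iff_of_subset ht'subset).2 ⟨i, hit', ?_⟩
    intro hi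
    exact (Finset.notMem_erase i t) (Finset.mem_of_mem_filter i hi)
  obtain ⟨s', hs't', hs'un, hs'pw⟩ := ih t' ht'sub
  refine ⟨insert i s', Finset.insert_subset hit' (hs't'.trans ht'subset), ?_, ?_⟩
  · rw [Finset.set_biUnion_insert, hs'un]
    apply Set.Subset.antisymm
    · apply Set.union_subset
      · exact Set.subset_biUnion_of_mem hit'
      · intro x hx
        rw [Set.mem_iUnion₂] at hx
        obtain ⟨j, hjt, hxj⟩ := hx
        exact Set.mem_biUnion (ht'subset hjt) hxj
    · intro x hx
      rw [Set.mem_iUnion₂] at hx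
      obtain ⟨j, hjt, hxj⟩ := hx
      by_cases hji : Disjoint (B j) (B i)
      · by_cases hj : j = i
        · subst hj; exact Set.mem_union_left _ hxj
        · exact Set.mem_union_right _
            (Set.mem_biUnion (Finset.mem_filter.2 ⟨Finset.mem_erase.2 ⟨hj, hjt⟩, hji⟩) hxj)
      · rcases hnest j i (Set.not_disjoint_iff_nonempty_inter.1 hji) with h | h
        · exact Set.mem_union_left _ (h hxj)
        · refine Set.mem_union_left _ ?_
          apply hmax hjt h
          exact hxj
  · rw [Finset.coe_insert]
    refine (@Set.pairwise_insert_of_symm _ _ _ _ ⟨?_⟩).2 ⟨hs'pw, ?_⟩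
    · intro x y h
      exact Disjoint.symm h
    · intro j hjs' _
      exact ((Finset.mem_filter.mp (hs't' hjs')).2).symm

/-- Let `X ⊆ F^×` be a compact open subset with `ord x ≤ -2` for all
`x ∈ X`, such that for every `a ∈ X` there is `1 ≤ n ≤ -ord a - 1` with `aU⁽ⁿ⁾ ⊆ X`.
Then `∫_X ψ(x) d^×x = 0`. -/
theorem stmt0 [Field F] [TopologicalSpace F] [IsTopologicalRing F]
    [MeasurableSpace F] [BorelSpace F]
    (q : ℕ) (hq : 2 ≤ q)
    (ord : F → ℤ)
    (hord : ∀ x y : F, x ≠ 0 → y ≠ 0 → ord (x * y) = ord x + ord y)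
    (ϖ : F) (hϖ0 : ϖ ≠ 0) (hϖ : ord ϖ = 1)
    (hbasis : (nhds (0 : F)).HasBasis (fun _ : ℕ => True)
      (fun n => {x : F | x = 0 ∨ (n : ℤ) ≤ ord x}))
    (hcomp : IsCompact (valRing ord))
    (ψ : F → ℂ) (hψc : Continuous ψ)
    (hψadd : ∀ x y : F, ψ (x + y) = ψ x * ψ y)
    (hψker : ∀ x : F, ψ x = 1 ↔ x ∈ valRing ord)
    (μ : Measure F) [μ.IsAddHaarMeasure]
    (hμ1 : μ (valRing ord) = 1)
    (hμϖ : ∀ s : Set F, μ ((fun x => ϖ * x) '' s) = μ s / q)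
    (X : Set F) (hXopen : IsOpen X) (hXcomp : IsCompact X)
    (hX : ∀ x ∈ X, x ≠ 0 ∧ ord x ≤ -2)
    (hXU : ∀ a ∈ X, ∃ n : ℕ, 1 ≤ n ∧ (n : ℤ) ≤ -ord a - 1 ∧
      ∀ u ∈ unitGroupN ord n, a * u ∈ X) :
    mulInt μ q ord X ψ = 0 := by
  classical
  have hPadd : ∀ {k : ℤ} {x y : F}, x ∈ Pset ord k → y ∈ Pset ord k →
      x + y ∈ Pset ord k := fun hx hy => Pset_add hord hϖ0 hϖ hψadd hψker hx hy
  have hPsub : ∀ {k : ℤ} {x y : F}, x ∈ Pset ord k → y ∈ Pset ord k →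
      x - y ∈ Pset ord k := fun hx hy => Pset_sub hord hϖ0 hϖ hψadd hψker hx hy
  have hPopen : ∀ k : ℤ, IsOpen (Pset ord k) :=
    Pset_isOpen hbasis (fun hx hy => hPadd hx hy)
  have hPmeas : ∀ k : ℤ, MeasurableSet (Pset ord k) := fun k => (hPopen k).measurableSet
  have hPcomp : ∀ k : ℤ, IsCompact (Pset ord k) := fun k => by
    rw [Pset_eq_image hord hϖ0 hϖ k]
    exact hcomp.image (continuous_const.mul continuous_id)
  -- the integral of ψ over `𝔭^k` vanishes when `k ≤ -1`
  have hPint : ∀ k : ℤ, k ≤ -1 → ∫ x in Pset ord k, ψ x ∂μ = 0 := by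
    intro k hk
    have hz : (ϖ ^ k : F) ∈ Pset ord k := Or.inr (by rw [ord_zpow' hord hϖ0 hϖ])
    have hψz : ψ (ϖ ^ k) ≠ 1 := by
      rw [Ne, hψker]
      rintro (h | h)
      · exact zpow_ne_zero k hϖ0 h
      · rw [ord_zpow' hord hϖ0 hϖ] at h; omega
    have hset : {x | x - ϖ ^ k ∈ Pset ord k} = Pset ord k := by
      ext x
      constructor
      · intro hx
        have := hPadd hx hz
        simpa using this
      · intro hx
        exact hPsub hx hz
    have hsh := shift_integral μ hψadd (Pset ord k) (hPmeas k) (ϖ ^ k)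
    rw [hset] at hsh
    have h2 : (ψ (ϖ ^ k) - 1) * ∫ x in Pset ord k, ψ x ∂μ = 0 := by
      rw [sub_mul, one_mul, ← hsh, sub_self]
    rcases mul_eq_zero.1 h2 with h | h
    · exact absurd (by linear_combination h) hψz
    · exact h
  -- each point of X has a ball neighbourhood inside X
  have hball : ∀ a ∈ X, ∃ k : ℤ, ord a < k ∧ k ≤ -1 ∧
      {x | x - a ∈ Pset ord k} ⊆ X := by
    intro a ha
    obtain ⟨haz, hago⟩ := hX a ha
    obtain ⟨n, hn1, hn2, hn3⟩ := hXU a ha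
    refine ⟨ord a + n, by omega, by omega, ?_⟩
    intro x hx
    have hx' : x - a ∈ Pset ord (ord a + n) := hx
    have hxa : x = a * (1 + (x - a) / a) := by field_simp; ring
    rw [hxa]
    apply hn3
    rcases eq_or_ne (x - a) 0 with h0 | h0
    · rw [h0]
      norm_num
      exact ⟨one_ne_zero, ord_one' hord, Or.inl rfl⟩
    · have hords : (ord a + n : ℤ) ≤ ord (x - a) := hx'.resolve_left h0
      have hordt : (n : ℤ) ≤ ord ((x - a) / a) := by
        rw [div_eq_mul_inv, hord _ _ h0 (inv_ne_zero haz), ord_inv' hord haz]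
        omega
      have htP : (x - a) / a ∈ Pset ord n := Or.inr hordt
      have hob := ord_ball hord hϖ0 hϖ hψadd hψker (one_ne_zero : (1:F) ≠ 0)
        (show ord (1:F) < (n:ℤ) by rw [ord_one' hord]; omega) htP
      refine ⟨hob.1, ?_, Or.inr (by simpa using hordt)⟩
      rw [hob.2, ord_one' hord]
  choose! mm hm1 hm2 hm3 using hball
  set B : F → Set F := fun a => {x | x - a ∈ Pset ord (mm a)} with hBdef
  have hBopen : ∀ a, IsOpen (B a) := fun a =>
    (hPopen (mm a)).preimage (continuous_id.sub continuous_const)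
  obtain ⟨t, ht⟩ := hXcomp.elim_finite_subcover (fun a : X => B a.1)
    (fun a => hBopen a.1)
    (fun x hx => Set.mem_iUnion.2 ⟨⟨x, hx⟩, show x - x ∈ Pset ord (mm x) by
      rw [sub_self]; exact Pset_zero_mem _⟩)
  have hsub : ∀ a b : F, mm a ≤ mm b → ∀ z, z ∈ B a → z ∈ B b → B b ⊆ B a := by
    intro a b hab z hza hzb y hy
    have h1 : y - b ∈ Pset ord (mm a) := Pset_mono' hab hy
    have h2 : z - b ∈ Pset ord (mm a) := Pset_mono' hab hzb
    have h3 : z - a ∈ Pset ord (mm a) := hza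
    have heq : y - a = (y - b) - (z - b) + (z - a) := by ring
    show y - a ∈ Pset ord (mm a)
    rw [heq]
    exact hPadd (hPsub h1 h2) h3
  have hnest : ∀ i j : X, ((B i.1) ∩ (B j.1)).Nonempty →
      B i.1 ⊆ B j.1 ∨ B j.1 ⊆ B i.1 := by
    rintro i j ⟨z, hzi, hzj⟩
    rcases le_total (mm i.1) (mm j.1) with h | h
    · exact Or.inr (hsub i.1 j.1 h z hzi hzj)
    · exact Or.inl (hsub j.1 i.1 h z hzj hzi)
  obtain ⟨s, hst, hsun, hspw⟩ := disjointify (fun a : X => B a.1) hnest t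
  have hXeq : X = ⋃ i ∈ s, B (i : X).1 := by
    apply Set.Subset.antisymm
    · intro x hx
      have hx2 := ht hx
      rwa [← hsun] at hx2
    · intro x hx
      rw [Set.mem_iUnion₂] at hx
      obtain ⟨i, _, hxi⟩ := hx
      exact hm3 i.1 i.2 hxi
  -- ord is constant on each ball
  have hord_const : ∀ a ∈ X, ∀ x ∈ B a, ord x = ord a := by
    intro a ha x hx
    have h := ord_ball hord hϖ0 hϖ hψadd hψker (hX a ha).1 (hm1 a ha)
      (hx : x - a ∈ Pset ord (mm a))
    have heq : a + (x - a) = x := by ring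
    rw [heq] at h
    exact h.2
  have hBcomp : ∀ a, IsCompact (B a) := by
    intro a
    have himg : B a = (fun y => a + y) '' Pset ord (mm a) := by
      ext x
      constructor
      · intro hx
        exact ⟨x - a, hx, by ring⟩
      · rintro ⟨y, hy, rfl⟩
        show a + y - a ∈ Pset ord (mm a)
        simpa using hy
    rw [himg]
    exact (hPcomp (mm a)).image (continuous_const.add continuous_id)
  have hBint : ∀ a ∈ X, ∫ x in B a, ψ x ∂μ = 0 := by
    intro a ha
    have : ∫ x in B a, ψ x ∂μ = ψ a * ∫ x in Pset ord (mm a), ψ x ∂μ :=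
      shift_integral μ hψadd (Pset ord (mm a)) (hPmeas _) a
    rw [this, hPint _ (hm2 a ha), mul_zero]
  have hBintg : ∀ a ∈ X, IntegrableOn (fun x => ψ x * (q:ℂ) ^ (ord x)) (B a) μ := by
    intro a ha
    have hmeas := (hBopen a).measurableSet
    obtain ⟨C, hC⟩ := (hBcomp a).exists_bound_of_continuousOn hψc.continuousOn
    have hψint : IntegrableOn ψ (B a) μ :=
      Measure.integrableOn_of_bounded ((hBcomp a).measure_lt_top).ne
        hψc.aestronglyMeasurable ((ae_restrict_iff' hmeas).2 (ae_of_all _ hC))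
    have hcint : IntegrableOn (fun x => ψ x * (q:ℂ) ^ (ord a)) (B a) μ :=
      hψint.mul_const _
    exact hcint.congr_fun (fun x hx => by rw [hord_const a ha x hx]) hmeas
  have key : ∫ x in X, ψ x * (q:ℂ) ^ (ord x) ∂μ = 0 := by
    rw [hXeq, integral_biUnion_finset s (fun i _ => (hBopen i.1).measurableSet) hspw
      (fun i _ => hBintg i.1 i.2)]
    apply Finset.sum_eq_zero
    intro i hi
    have hmeas := (hBopen i.1).measurableSet
    have hcongr : ∫ x in B i.1, ψ x * (q:ℂ) ^ (ord x) ∂μ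
        = ∫ x in B i.1, ψ x * (q:ℂ) ^ (ord i.1) ∂μ :=
      setIntegral_congr_fun hmeas (fun x hx => by rw [hord_const i.1 i.2 x hx])
    rw [hcongr, integral_mul_const, hBint i.1 i.2, zero_mul]
  rw [mulInt, key, mul_zero]
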